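/- Let f : ℝ^d → ℝ, let x ∈ ℝ^d, let θ > 0 be a gradient threshold, and let S_θ = ∑_{i=1}^d 1(|∂f/∂xᵢ(x)| ≥ θ) be the number of nontrivial gradient dimensions. Suppose that for each nontrivial dimension i (i.e., |∂f/∂xᵢ(x)| ≥ θ), the function t ↦ f(x + t·eᵢ) is three times continuously differentiable near 0 with third derivative bounded in absolute value by 6C for some C > 0, and define the estimated gradient ĝ by ĝᵢ = (f(x + δ·eᵢ) − f(x − δ·eᵢ))/(2δ) on nontrivial dimensions i (with 0 < δ within the region of validity of the derivative bound) and ĝᵢ = 0 on trivial dimensions (those with |∂f/∂xᵢ(x)| < θ). Then ‖ĝ − ∇f(x)‖₁ ≤ S_θ · C · δ² + (d − S_θ) · θ. -/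

import Mathlib

open Set

lemma iterWithin_eq_iter : ∀ (n : ℕ) {f : ℝ → ℝ} {s : Set ℝ}, UniqueDiffOn ℝ s → ∀ {x : ℝ}, x ∈ s → ContDiffAt ℝ n f x → iteratedDerivWithin n f s x = iteratedDeriv n f x := by
  intro n
  induction n with
  | zero => intro f s hs x hx h; simp
  | succ n ih =>
    intro f s hs x hx h
    obtain ⟨u, hu, hfu⟩ := h.contDiffOn le_rfl (by simp)
    obtain ⟨v, hvu, hv, hxv⟩ := mem_nhds_iff.1 hu
    have hfv : ContDiffOn ℝ (n+1) f v := hfu.mono hvu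
    have hone : (1 : WithTop ℕ∞) ≤ (n+1 : ℕ) := by exact_mod_cast Nat.le_add_left 1 n
    have heq : derivWithin f s =ᶠ[nhdsWithin x s] deriv f := by
      filter_upwards [self_mem_nhdsWithin, mem_nhdsWithin_of_mem_nhds (hv.mem_nhds hxv)] with y hys hyv
      exact ((hfv.contDiffAt (hv.mem_nhds hyv)).differentiableAt (by simp)).derivWithin (hs y hys)
    have heqx : derivWithin f s x = deriv f x :=
      ((hfv.contDiffAt (hv.mem_nhds hxv)).differentiableAt (by simp)).derivWithin (hs x hx)
    rw [iteratedDerivWithin_succ', iteratedDeriv_succ']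
    have h2 : iteratedDerivWithin n (derivWithin f s) s x = iteratedDerivWithin n (deriv f) s x := by
      simp only [iteratedDerivWithin]
      rw [heq.iteratedFDerivWithin_eq heqx n]
    rw [h2]
    exact ih hs hx ((hfv.deriv_of_isOpen hv (by norm_cast)).contDiffAt (hv.mem_nhds hxv))

lemma central_bound {g : ℝ → ℝ} {C δ δ₀ : ℝ} (hC : 0 < C) (hδ : 0 < δ) (hδle : δ ≤ δ₀)
    (hg : ContDiffOn ℝ 3 g (Icc (-δ₀) δ₀))
    (hbd : ∀ t ∈ Icc (-δ₀) δ₀, |iteratedDerivWithin 3 g (Icc (-δ₀) δ₀) t| ≤ 6 * C) :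
    |(g δ - g (-δ)) / (2 * δ) - deriv g 0| ≤ C * δ ^ 2 := by
  have hδ₀ : 0 < δ₀ := lt_of_lt_of_le hδ hδle
  set J : Set ℝ := Ioo (-δ₀) δ₀ with hJ
  have hJIcc : J ⊆ Icc (-δ₀) δ₀ := Ioo_subset_Icc_self
  have hgJ : ContDiffOn ℝ 3 g J := hg.mono hJIcc
  -- ContDiffAt everywhere in J
  have cg : ∀ t ∈ J, ContDiffAt ℝ 3 g t := fun t ht => hgJ.contDiffAt (isOpen_Ioo.mem_nhds ht)
  -- transferred bound
  have hbd' : ∀ t ∈ J, |iteratedDeriv 3 g t| ≤ 6 * C := by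
    intro t ht
    rw [← iterWithin_eq_iter 3 (uniqueDiffOn_Icc (by linarith)) (hJIcc ht) (cg t ht)]
    exact hbd t (hJIcc ht)
  set h : ℝ → ℝ := fun t => g (-t) with hh
  have ch : ∀ y : ℝ, -y ∈ J → ContDiffAt ℝ 3 h y := by
    intro y hy
    exact ContDiffAt.comp y (cg (-y) hy) (contDiff_neg.contDiffAt)
  have hmem : ∀ y ∈ Ioo (0:ℝ) δ, y ∈ J := fun y hy => ⟨by linarith [hy.1], by linarith [hy.2]⟩
  have hmemneg : ∀ y ∈ Ioo (0:ℝ) δ, -y ∈ J := fun y hy => ⟨by linarith [hy.2], by linarith [hy.1]⟩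
  have hud : UniqueDiffOn ℝ (Icc (0:ℝ) δ) := uniqueDiffOn_Icc hδ
  have hsub : Icc (0:ℝ) δ ⊆ Icc (-δ₀) δ₀ := Icc_subset_Icc (by linarith) hδle
  have h0mem : (0:ℝ) ∈ Icc (0:ℝ) δ := ⟨le_refl 0, le_of_lt hδ⟩
  have c0 : ContDiffAt ℝ 3 g 0 := cg 0 ⟨by linarith, hδ₀⟩
  have ch0 : ContDiffAt ℝ 3 h 0 :=
    ch 0 (by simp only [neg_zero]; exact ⟨by linarith, hδ₀⟩)
  -- differentiability of second iterated derivWithin on Ioo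
  have hd2 : ContDiffOn ℝ 1 (deriv (deriv g)) J := by
    have h1 : ContDiffOn ℝ 2 (deriv g) J := hgJ.deriv_of_isOpen isOpen_Ioo (by norm_num)
    exact h1.deriv_of_isOpen isOpen_Ioo (by norm_num)
  have hiter2 : iteratedDeriv 2 g = deriv (deriv g) := by
    rw [iteratedDeriv_succ, iteratedDeriv_one]
  have hDg : DifferentiableOn ℝ (iteratedDeriv 2 g) J := by
    rw [hiter2]; exact hd2.differentiableOn (by norm_num)
  -- Taylor for g on Icc 0 δ
  have hg2 : ContDiffOn ℝ 2 g (Icc (0:ℝ) δ) := (hg.of_le (by norm_num)).mono hsub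
  have hdiffg : DifferentiableOn ℝ (iteratedDerivWithin 2 g (Icc (0:ℝ) δ)) (Ioo (0:ℝ) δ) := by
    refine ((hDg.mono (fun y hy => hmem y hy))).congr ?_
    intro y hy
    exact iterWithin_eq_iter 2 hud (Ioo_subset_Icc_self hy) ((cg y (hmem y hy)).of_le (by norm_num))
  have hu : uIcc (0:ℝ) δ = Icc 0 δ := uIcc_of_le hδ.le
  have huo : uIoo (0:ℝ) δ = Ioo 0 δ := uIoo_of_le hδ.le
  obtain ⟨ξ, hξ, hTg⟩ := taylor_mean_remainder_lagrange (n := 2) (ne_of_lt hδ) (by rw [hu]; exact hg2) (by rw [hu, huo]; exact hdiffg)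
  rw [huo] at hξ; rw [hu] at hTg
  -- Taylor for h on Icc 0 δ
  have hh2 : ContDiffOn ℝ 2 h (Icc (0:ℝ) δ) := by
    refine ((hg.of_le (by norm_num)).comp (contDiff_neg.contDiffOn) ?_)
    intro y hy
    rw [Set.mem_Icc] at hy ⊢
    constructor <;> [linarith [hy.2]; linarith [hy.1]]
  have hDh : DifferentiableOn ℝ (fun y => iteratedDeriv 2 g (-y)) (Ioo (0:ℝ) δ) := by
    refine (hDg.comp (differentiable_neg.differentiableOn) ?_)
    intro y hy; exact hmemneg y hy
  have hdiffh : DifferentiableOn ℝ (iteratedDerivWithin 2 h (Icc (0:ℝ) δ)) (Ioo (0:ℝ) δ) := by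
    refine hDh.congr ?_
    intro y hy
    rw [iterWithin_eq_iter 2 hud (Ioo_subset_Icc_self hy) ((ch y (hmemneg y hy)).of_le (by norm_num))]
    rw [hh]
    simpa using iteratedDeriv_comp_neg 2 g y
  obtain ⟨η, hη, hTh⟩ := taylor_mean_remainder_lagrange (n := 2) (ne_of_lt hδ) (by rw [hu]; exact hh2) (by rw [hu, huo]; exact hdiffh)
  rw [huo] at hη; rw [hu] at hTh
  -- evaluate Taylor polynomials
  have taylg : taylorWithinEval g 2 (Icc (0:ℝ) δ) 0 δ
      = g 0 + deriv g 0 * δ + iteratedDeriv 2 g 0 * δ ^ 2 / 2 := by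
    rw [taylor_within_apply]
    have e0 : iteratedDerivWithin 0 g (Icc (0:ℝ) δ) 0 = g 0 := by simp
    have e1 : iteratedDerivWithin 1 g (Icc (0:ℝ) δ) 0 = deriv g 0 := by
      rw [iterWithin_eq_iter 1 hud h0mem (c0.of_le (by norm_num)), iteratedDeriv_one]
    have e2 : iteratedDerivWithin 2 g (Icc (0:ℝ) δ) 0 = iteratedDeriv 2 g 0 :=
      iterWithin_eq_iter 2 hud h0mem (c0.of_le (by norm_num))
    rw [Finset.sum_range_succ, Finset.sum_range_succ, Finset.sum_range_one, e0, e1, e2]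
    simp [Nat.factorial]
    ring
  have taylh : taylorWithinEval h 2 (Icc (0:ℝ) δ) 0 δ
      = g 0 - deriv g 0 * δ + iteratedDeriv 2 g 0 * δ ^ 2 / 2 := by
    rw [taylor_within_apply]
    have e0 : iteratedDerivWithin 0 h (Icc (0:ℝ) δ) 0 = g 0 := by simp [hh]
    have e1 : iteratedDerivWithin 1 h (Icc (0:ℝ) δ) 0 = - deriv g 0 := by
      rw [iterWithin_eq_iter 1 hud h0mem (ch0.of_le (by norm_num)), iteratedDeriv_one]
      have := iteratedDeriv_comp_neg 1 g 0
      simp only [iteratedDeriv_one] at this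
      simpa using this
    have e2 : iteratedDerivWithin 2 h (Icc (0:ℝ) δ) 0 = iteratedDeriv 2 g 0 := by
      rw [iterWithin_eq_iter 2 hud h0mem (ch0.of_le (by norm_num))]
      have := iteratedDeriv_comp_neg 2 g 0
      simpa using this
    rw [Finset.sum_range_succ, Finset.sum_range_succ, Finset.sum_range_one, e0, e1, e2]
    simp [Nat.factorial]
    ring
  -- remainder bounds
  have hRg : |iteratedDerivWithin 3 g (Icc (0:ℝ) δ) ξ| ≤ 6 * C := by
    rw [iterWithin_eq_iter 3 hud (Ioo_subset_Icc_self hξ) (cg ξ (hmem ξ hξ))]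
    exact hbd' ξ (hmem ξ hξ)
  have hRh : |iteratedDerivWithin 3 h (Icc (0:ℝ) δ) η| ≤ 6 * C := by
    rw [iterWithin_eq_iter 3 hud (Ioo_subset_Icc_self hη) (ch η (hmemneg η hη))]
    rw [hh]
    rw [iteratedDeriv_comp_neg 3 g η]
    rw [smul_eq_mul, show ((-1:ℝ))^3 = -1 by norm_num, neg_one_mul, abs_neg]
    exact hbd' (-η) (hmemneg η hη)
  -- put it together
  have hgδ : g δ - (g 0 + deriv g 0 * δ + iteratedDeriv 2 g 0 * δ ^ 2 / 2)
      = iteratedDerivWithin 3 g (Icc (0:ℝ) δ) ξ * δ ^ 3 / 6 := by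
    rw [← taylg]
    convert hTg using 2 <;> norm_num [Nat.factorial]
  have hhδ : g (-δ) - (g 0 - deriv g 0 * δ + iteratedDeriv 2 g 0 * δ ^ 2 / 2)
      = iteratedDerivWithin 3 h (Icc (0:ℝ) δ) η * δ ^ 3 / 6 := by
    rw [← taylh]
    have : h δ = g (-δ) := rfl
    rw [← this]
    convert hTh using 2 <;> norm_num [Nat.factorial]
  set Rg := iteratedDerivWithin 3 g (Icc (0:ℝ) δ) ξ with hRgdef
  set Rh := iteratedDerivWithin 3 h (Icc (0:ℝ) δ) η with hRhdef
  have key : (g δ - g (-δ)) / (2 * δ) - deriv g 0 = (Rg - Rh) * δ ^ 2 / 12 := by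
    have h2δ : (2 : ℝ) * δ ≠ 0 := by positivity
    field_simp
    nlinarith [hgδ, hhδ]
  rw [key]
  have habs : |Rg - Rh| ≤ 12 * C := by
    have := abs_sub (Rg) (Rh)
    calc |Rg - Rh| ≤ |Rg| + |Rh| := abs_sub _ _
      _ ≤ 6 * C + 6 * C := add_le_add hRg hRh
      _ = 12 * C := by ring
  rw [abs_div, abs_mul]
  rw [show |(12:ℝ)| = 12 by norm_num, abs_of_nonneg (sq_nonneg δ)]
  rw [div_le_iff₀ (by norm_num)]
  nlinarith [sq_nonneg δ, mul_le_mul_of_nonneg_right habs (le_of_lt (pow_pos hδ 2))]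

open Classical in
/-- SFD gradient estimation error bound (Theorem 2 of the paper). -/
theorem stmt_2 (d : ℕ) (f : (Fin d → ℝ) → ℝ) (x : Fin d → ℝ) (θ C δ δ₀ : ℝ)
    (hθ : 0 < θ) (hC : 0 < C) (hδ : 0 < δ) (hδle : δ ≤ δ₀)
    (grad : Fin d → ℝ)
    (hgrad : ∀ i : Fin d, grad i = deriv (fun t : ℝ => f (x + t • (Pi.single i 1 : Fin d → ℝ))) 0)
    (hf : ∀ i : Fin d, θ ≤ |grad i| →
      ContDiffOn ℝ 3 (fun t : ℝ => f (x + t • (Pi.single i 1 : Fin d → ℝ))) (Set.Icc (-δ₀) δ₀) ∧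
      ∀ t ∈ Set.Icc (-δ₀) δ₀,
        |iteratedDerivWithin 3 (fun t : ℝ => f (x + t • (Pi.single i 1 : Fin d → ℝ)))
          (Set.Icc (-δ₀) δ₀) t| ≤ 6 * C)
    (ghat : Fin d → ℝ)
    (hghat : ∀ i : Fin d, ghat i =
      if θ ≤ |grad i| then
        (f (x + δ • (Pi.single i 1 : Fin d → ℝ)) - f (x - δ • (Pi.single i 1 : Fin d → ℝ))) / (2 * δ)
      else 0)
    (Sθ : ℕ)
    (hS : Sθ = (Finset.univ.filter (fun i : Fin d => θ ≤ |grad i|)).card) :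
    ∑ i : Fin d, |ghat i - grad i| ≤ (Sθ : ℝ) * C * δ ^ 2 + ((d : ℝ) - (Sθ : ℝ)) * θ := by
  have key : ∀ i : Fin d, θ ≤ |grad i| → |ghat i - grad i| ≤ C * δ ^ 2 := by
    intro i hi
    obtain ⟨hcont, hb⟩ := hf i hi
    have hgi := central_bound hC hδ hδle hcont hb
    rw [hghat i, if_pos hi, hgrad i]
    have hsd : f (x - δ • (Pi.single i 1 : Fin d → ℝ))
        = f (x + (-δ) • (Pi.single i 1 : Fin d → ℝ)) := by
      rw [neg_smul, ← sub_eq_add_neg]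
    rw [hsd]
    exact hgi
  have key2 : ∀ i : Fin d, ¬ θ ≤ |grad i| → |ghat i - grad i| ≤ θ := by
    intro i hi
    rw [hghat i, if_neg hi, zero_sub, abs_neg]
    exact le_of_lt (lt_of_not_ge hi)
  rw [← Finset.sum_filter_add_sum_filter_not Finset.univ (fun i => θ ≤ |grad i|)]
  have h1 : ∑ i ∈ Finset.univ.filter (fun i => θ ≤ |grad i|), |ghat i - grad i|
      ≤ (Sθ : ℝ) * (C * δ ^ 2) := by
    calc ∑ i ∈ Finset.univ.filter (fun i => θ ≤ |grad i|), |ghat i - grad i|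
        ≤ ∑ _i ∈ Finset.univ.filter (fun i => θ ≤ |grad i|), C * δ ^ 2 :=
          Finset.sum_le_sum (fun i hi => key i (Finset.mem_filter.1 hi).2)
      _ = (Sθ : ℝ) * (C * δ ^ 2) := by rw [Finset.sum_const, hS, nsmul_eq_mul]
  have hcard : Sθ + (Finset.univ.filter (fun i : Fin d => ¬ θ ≤ |grad i|)).card = d := by
    rw [hS, Finset.card_filter_add_card_filter_not, Finset.card_univ, Fintype.card_fin]
  have h2 : ∑ i ∈ Finset.univ.filter (fun i => ¬ θ ≤ |grad i|), |ghat i - grad i|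
      ≤ ((d : ℝ) - (Sθ : ℝ)) * θ := by
    calc ∑ i ∈ Finset.univ.filter (fun i => ¬ θ ≤ |grad i|), |ghat i - grad i|
        ≤ ∑ _i ∈ Finset.univ.filter (fun i => ¬ θ ≤ |grad i|), θ :=
          Finset.sum_le_sum (fun i hi => key2 i (Finset.mem_filter.1 hi).2)
      _ = ((Finset.univ.filter (fun i : Fin d => ¬ θ ≤ |grad i|)).card : ℝ) * θ := by
          rw [Finset.sum_const, nsmul_eq_mul]
      _ = ((d : ℝ) - (Sθ : ℝ)) * θ := by
          congr 1
          have : (Sθ : ℝ) + ((Finset.univ.filter (fun i : Fin d => ¬ θ ≤ |grad i|)).card : ℝ)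
              = (d : ℝ) := by exact_mod_cast congrArg (Nat.cast : ℕ → ℝ) hcard
          linarith
  have := add_le_add h1 h2
  calc _ ≤ (Sθ : ℝ) * (C * δ ^ 2) + ((d : ℝ) - (Sθ : ℝ)) * θ := add_le_add h1 h2
    _ = (Sθ : ℝ) * C * δ ^ 2 + ((d : ℝ) - (Sθ : ℝ)) * θ := by ring
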